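/- Let G be a word-representable simple graph with connected components G_1 = (V_1, E_1), ..., G_k = (V_k, E_k). Then the minimal length ℓ(G) of a word that word-represents G satisfies ℓ(G) ≤ Σ_{i=1}^{k} (ℓ(G_i) + |V_i|) − max_{1 ≤ j ≤ k} |V_j|. -/

import Mathlib

variable {V : Type*}

/-- The restriction of a word `w` to the letters `x` and `y`. -/
def restrictWord [DecidableEq V] (w : List V) (x y : V) : List V :=
  w.filter fun z => decide (z = x ∨ z = y)

/-- `x` and `y` alternate in `w`: the restriction of `w` to `{x, y}` has no two
consecutive equal letters. -/
def Alternates [DecidableEq V] (w : List V) (x y : V) : Prop :=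
  (restrictWord w x y).Chain' (· ≠ ·)

/-- `w` word-represents the simple graph `G`: every vertex occurs in `w`, and two distinct
vertices are adjacent iff they alternate in `w`. -/
def Represents [DecidableEq V] (G : SimpleGraph V) (w : List V) : Prop :=
  (∀ v : V, v ∈ w) ∧ ∀ x y : V, x ≠ y → (G.Adj x y ↔ Alternates w x y)

/-- `ℓ(G)`: the minimal length of a word-representant of `G`. -/
noncomputable def minRepLength [DecidableEq V] (G : SimpleGraph V) : ℕ :=
  sInf {n | ∃ w : List V, Represents G w ∧ w.length = n}

section Aux

variable {α β : Type*} [DecidableEq α] [DecidableEq β]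

lemma restrictWord_append (w₁ w₂ : List α) (x y : α) :
    restrictWord (w₁ ++ w₂) x y = restrictWord w₁ x y ++ restrictWord w₂ x y :=
  List.filter_append _ _

lemma restrictWord_eq_nil {w : List α} {x y : α}
    (h : ∀ z ∈ w, z ≠ x ∧ z ≠ y) : restrictWord w x y = [] := by
  apply List.filter_eq_nil_iff.mpr
  intro a ha
  simp only [decide_eq_true_eq, not_or]
  exact h a ha

lemma mem_restrictWord_left {w : List α} {x y : α} (hx : x ∈ w) : x ∈ restrictWord w x y :=
  List.mem_filter.mpr ⟨hx, by simp⟩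

lemma mem_restrictWord_right {w : List α} {x y : α} (hy : y ∈ w) : y ∈ restrictWord w x y :=
  List.mem_filter.mpr ⟨hy, by simp⟩

lemma mem_of_mem_restrictWord {w : List α} {x y z : α} (hz : z ∈ restrictWord w x y) :
    z ∈ w ∧ (z = x ∨ z = y) := by
  have := List.mem_filter.mp hz
  simpa using this

lemma restrictWord_comm (w : List α) (x y : α) :
    restrictWord w x y = restrictWord w y x := by
  apply List.filter_congr
  intro z _
  exact decide_eq_decide.mpr or_comm

lemma restrictWord_map {f : α → β} (hf : Function.Injective f) (w : List α) (x y : α) :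
    restrictWord (w.map f) (f x) (f y) = (restrictWord w x y).map f := by
  unfold restrictWord
  rw [List.filter_map]
  congr 1
  apply List.filter_congr
  intro z _
  simp only [Function.comp_apply]
  apply decide_eq_decide.mpr
  constructor
  · rintro (h | h)
    · exact Or.inl (hf h)
    · exact Or.inr (hf h)
  · rintro (rfl | rfl) <;> simp

lemma alternates_map_iff {f : α → β} (hf : Function.Injective f) (w : List α) (x y : α) :
    Alternates (w.map f) (f x) (f y) ↔ Alternates w x y := by
  unfold Alternates
  unfold List.Chain'
  rw [restrictWord_map hf, List.isChain_map]
  constructor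
  · exact fun h => h.imp fun {a b} hab e => hab (by rw [e])
  · exact fun h => h.imp fun {a b} hab e => hab (hf e)

lemma alternates_comm (w : List α) (x y : α) :
    Alternates w x y ↔ Alternates w y x := by
  unfold Alternates
  rw [restrictWord_comm]

lemma restrictWord_filter (q : α → Bool) {w : List α} {x y : α}
    (hqx : q x = true) (hqy : q y = true) :
    restrictWord (w.filter q) x y = restrictWord w x y := by
  unfold restrictWord
  rw [List.filter_filter]
  apply List.filter_congr
  intro z _
  by_cases h : z = x ∨ z = y
  · rcases h with rfl | rfl <;> simp [hqx, hqy]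
  · simp [h]

lemma restrictWord_flatten (M : List (List α)) (x y : α) :
    restrictWord M.flatten x y = (M.map fun l => restrictWord l x y).flatten := by
  induction M with
  | nil => rfl
  | cons a M ih =>
    rw [List.flatten_cons, restrictWord_append, ih, List.map_cons, List.flatten_cons]

lemma dedup_getLast? (l : List α) : l.dedup.getLast? = l.getLast? := by
  induction l with
  | nil => simp
  | cons a l ih =>
    by_cases h : a ∈ l
    · rw [List.dedup_cons_of_mem h]
      cases l with
      | nil => simp at h
      | cons b m => rw [List.getLast?_cons_cons]; exact ih
    · rw [List.dedup_cons_of_notMem h]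
      rcases eq_or_ne l [] with rfl | hl
      · simp
      · obtain ⟨b, m, hbm⟩ :=
          List.exists_cons_of_ne_nil (fun e => hl ((List.dedup_eq_nil l).mp e))
        obtain ⟨c, m', rfl⟩ := List.exists_cons_of_ne_nil hl
        rw [hbm, List.getLast?_cons_cons, ← hbm, ih, List.getLast?_cons_cons]

lemma dedup_filter (p : α → Bool) (l : List α) :
    (l.filter p).dedup = l.dedup.filter p := by
  induction l with
  | nil => simp
  | cons a l ih =>
    by_cases h : a ∈ l
    · rw [List.dedup_cons_of_mem h]
      cases hp : p a
      · rw [List.filter_cons_of_neg (by simp [hp]), ih]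
      · rw [List.filter_cons_of_pos (by simp [hp]),
          List.dedup_cons_of_mem (List.mem_filter.mpr ⟨h, hp⟩), ih]
    · rw [List.dedup_cons_of_notMem h]
      cases hp : p a
      · rw [List.filter_cons_of_neg (by simp [hp]), List.filter_cons_of_neg (by simp [hp]), ih]
      · rw [List.filter_cons_of_pos (by simp [hp]), List.filter_cons_of_pos (by simp [hp]),
          List.dedup_cons_of_notMem (fun hm => h (List.mem_of_mem_filter hm)), ih]

lemma nodup_two {l : List α} {x y : α} (hnd : l.Nodup)
    (hmem : ∀ z ∈ l, z = x ∨ z = y) (hx : x ∈ l) (hy : y ∈ l) (hxy : x ≠ y) :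
    l = [x, y] ∨ l = [y, x] := by
  rcases l with _ | ⟨a, _ | ⟨b, _ | ⟨c, m⟩⟩⟩
  · simp at hx
  · simp only [List.mem_singleton] at hx hy
    exact absurd (hx.trans hy.symm) hxy
  · have ha := hmem a (by simp)
    have hb := hmem b (by simp)
    have hab : a ≠ b := by simpa using hnd
    rcases ha with rfl | rfl
    · rcases hb with rfl | rfl
      · exact absurd rfl hab
      · exact Or.inl rfl
    · rcases hb with rfl | rfl
      · exact Or.inr rfl
      · exact absurd rfl hab
  · exfalso
    have ha := hmem a (by simp)
    have hb := hmem b (by simp)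
    have hc := hmem c (by simp)
    rw [List.nodup_cons] at hnd
    obtain ⟨ha', hnd⟩ := hnd
    rw [List.nodup_cons] at hnd
    obtain ⟨hb', _⟩ := hnd
    have h1 : a ≠ b := fun e => ha' (by rw [e]; simp)
    have h2 : a ≠ c := fun e => ha' (by rw [e]; simp)
    have h3 : b ≠ c := fun e => hb' (by rw [e]; simp)
    rcases ha with rfl | rfl <;> rcases hb with rfl | rfl <;> rcases hc with rfl | rfl <;>
      simp_all

lemma alternates_append_dedup {u : List α} {x y : α} (hx : x ∈ u) (hy : y ∈ u) (hxy : x ≠ y) :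
    Alternates (u ++ u.dedup) x y ↔ Alternates u x y := by
  unfold Alternates
  rw [restrictWord_append]
  have hdd : restrictWord u.dedup x y = (restrictWord u x y).dedup := by
    unfold restrictWord
    rw [dedup_filter]
  rw [hdd]
  have hmem : ∀ z ∈ (restrictWord u x y).dedup, z = x ∨ z = y := fun z hz =>
    (mem_of_mem_restrictWord (List.mem_dedup.mp hz)).2
  have hxr : x ∈ (restrictWord u x y).dedup := List.mem_dedup.mpr (mem_restrictWord_left hx)
  have hyr : y ∈ (restrictWord u x y).dedup := List.mem_dedup.mpr (mem_restrictWord_right hy)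
  have hlast := dedup_getLast? (restrictWord u x y)
  rcases nodup_two (List.nodup_dedup _) hmem hxr hyr hxy with h2 | h2
  · rw [h2] at hlast ⊢
    unfold List.Chain'
    rw [List.isChain_append]
    constructor
    · exact fun h => h.1
    · intro h
      refine ⟨h, by simp [hxy], ?_⟩
      intro a ha b hb
      rw [← hlast] at ha
      simp only [List.getLast?_cons_cons, List.getLast?_singleton, Option.mem_def,
        Option.some.injEq, List.head?_cons] at ha hb
      subst ha; subst hb
      exact hxy.symm
  · rw [h2] at hlast ⊢
    unfold List.Chain'
    rw [List.isChain_append]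
    constructor
    · exact fun h => h.1
    · intro h
      refine ⟨h, by simp [hxy.symm], ?_⟩
      intro a ha b hb
      rw [← hlast] at ha
      simp only [List.getLast?_cons_cons, List.getLast?_singleton, Option.mem_def,
        Option.some.injEq, List.head?_cons] at ha hb
      subst ha; subst hb
      exact hxy

lemma flatten_map_eq_single {γ : Type*} {M : List γ} {f : γ → List α} {c : γ}
    (hc : c ∈ M) (hnd : M.Nodup) (hf : ∀ c' ∈ M, c' ≠ c → f c' = []) :
    (M.map f).flatten = f c := by
  induction M with
  | nil => simp at hc
  | cons d M ih =>
    rw [List.map_cons, List.flatten_cons]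
    rw [List.nodup_cons] at hnd
    rcases List.mem_cons.mp hc with rfl | hc'
    · have he : (M.map f).flatten = [] := by
        rw [List.flatten_eq_nil_iff]
        intro l hl
        obtain ⟨c', hc', rfl⟩ := List.mem_map.mp hl
        exact hf c' (List.mem_cons_of_mem _ hc') (fun e => hnd.1 (by rw [← e]; exact hc'))
      rw [he, List.append_nil]
    · rw [hf d List.mem_cons_self (fun e => hnd.1 (by rw [e]; exact hc')),
        List.nil_append]
      exact ih hc' hnd.2 (fun c' h h' => hf c' (List.mem_cons_of_mem _ h) h')

open Classical in
noncomputable def subWord (w : List α) (S : Set α) : List ↥S :=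
  w.filterMap fun z => if h : z ∈ S then some ⟨z, h⟩ else none

open Classical in
lemma map_val_subWord (w : List α) (S : Set α) :
    (subWord w S).map Subtype.val = w.filter fun z => decide (z ∈ S) := by
  induction w with
  | nil => rfl
  | cons a l ih =>
    unfold subWord at ih ⊢
    rw [List.filterMap_cons]
    by_cases h : a ∈ S
    · rw [dif_pos h, List.map_cons, ih, List.filter_cons_of_pos (by simp [h])]
    · rw [dif_neg h, ih, List.filter_cons_of_neg (by simp [h])]

lemma represents_induce {G : SimpleGraph α} {w : List α} (h : Represents G w) (S : Set α) :
    Represents (G.induce S) (subWord w S) := by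
  classical
  constructor
  · rintro ⟨v, hv⟩
    unfold subWord
    rw [List.mem_filterMap]
    exact ⟨v, h.1 v, by rw [dif_pos hv]⟩
  · rintro x y hxy
    have hvne : (x : α) ≠ (y : α) := fun e => hxy (Subtype.ext e)
    have hadj : (G.induce S).Adj x y ↔ G.Adj ↑x ↑y := by simp
    rw [hadj, h.2 _ _ hvne]
    rw [← alternates_map_iff Subtype.val_injective (subWord w S) x y]
    unfold Alternates
    rw [map_val_subWord]
    rw [restrictWord_filter (fun z => decide (z ∈ S)) (decide_eq_true x.2)
      (decide_eq_true y.2)]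

end Aux

/-- If `G` is a word-representable graph with connected components
`G₁, …, G_k`, then `ℓ(G) ≤ Σᵢ (ℓ(Gᵢ) + |Vᵢ|) − maxⱼ |Vⱼ|`. -/
theorem min_length_le_sum_over_components [Fintype V] [DecidableEq V]
    (G : SimpleGraph V) (hG : ∃ w : List V, Represents G w) :
    minRepLength G ≤
      (∑ᶠ c : G.ConnectedComponent, (minRepLength (G.induce c.supp) + Nat.card c.supp)) -
        ⨆ c : G.ConnectedComponent, Nat.card c.supp := by
  classical
  obtain ⟨w0, hw0⟩ := hG
  by_cases hV : Nonempty V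
  swap
  · have hrep : Represents G ([] : List V) := by
      refine ⟨fun v => absurd ⟨v⟩ hV, fun x y _ => absurd ⟨x⟩ hV⟩
    have hle : minRepLength G ≤ 0 := Nat.sInf_le ⟨[], hrep, rfl⟩
    omega
  haveI : Fintype G.ConnectedComponent := Fintype.ofFinite _
  haveI : Nonempty G.ConnectedComponent :=
    ⟨G.connectedComponentMk (Classical.arbitrary V)⟩
  -- choose minimal words for each component
  have hex : ∀ c : G.ConnectedComponent, ∃ w : List ↥c.supp,
      Represents (G.induce c.supp) w ∧ w.length = minRepLength (G.induce c.supp) := by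
    intro c
    have hne : {n | ∃ w : List ↥c.supp,
        Represents (G.induce c.supp) w ∧ w.length = n}.Nonempty :=
      ⟨(subWord w0 c.supp).length, subWord w0 c.supp, represents_induce hw0 c.supp, rfl⟩
    exact Nat.sInf_mem hne
  choose wc hwc hwclen using hex
  -- basic facts about the words mapped into V
  have hu_mem : ∀ c, ∀ z ∈ (wc c).map Subtype.val, z ∈ c.supp := by
    intro c z hz
    obtain ⟨⟨z', hz'⟩, _, rfl⟩ := List.mem_map.mp hz
    exact hz'
  have hu_all : ∀ c, ∀ z ∈ c.supp, z ∈ (wc c).map Subtype.val := by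
    intro c z hz
    exact List.mem_map.mpr ⟨⟨z, hz⟩, (hwc c).1 ⟨z, hz⟩, rfl⟩
  have hu_adj : ∀ (c) (x y : V) (hx : x ∈ c.supp) (hy : y ∈ c.supp), x ≠ y →
      (G.Adj x y ↔ Alternates ((wc c).map Subtype.val) x y) := by
    intro c x y hx hy hxy
    have h1 : (G.induce c.supp).Adj ⟨x, hx⟩ ⟨y, hy⟩ ↔ G.Adj x y := by simp
    have h2 := (hwc c).2 ⟨x, hx⟩ ⟨y, hy⟩ (fun e => hxy (congrArg Subtype.val e))
    have h3 := alternates_map_iff Subtype.val_injective (wc c)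
      (⟨x, hx⟩ : ↥c.supp) (⟨y, hy⟩ : ↥c.supp)
    rw [← h1, h2, ← h3]
  -- the maximal component
  obtain ⟨cm, hcm⟩ := Finite.exists_max (fun c : G.ConnectedComponent => Nat.card c.supp)
  have hsup : (⨆ c : G.ConnectedComponent, Nat.card c.supp) = Nat.card cm.supp :=
    le_antisymm (ciSup_le hcm)
      (le_ciSup (f := fun c : G.ConnectedComponent => Nat.card c.supp)
        (Set.Finite.bddAbove (Set.finite_range _)) cm)
  -- the word
  set L : List G.ConnectedComponent := (Finset.univ.erase cm).toList with hLdef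
  set W : List V :=
    (L.map fun c => (wc c).map Subtype.val ++ ((wc c).map Subtype.val).dedup).flatten ++
      (wc cm).map Subtype.val with hWdef
  have hsupp_ne : ∀ (c c' : G.ConnectedComponent) (z : V),
      z ∈ c.supp → c' ≠ c → z ∉ c'.supp := by
    intro c c' z hz hne hz'
    rw [SimpleGraph.ConnectedComponent.mem_supp_iff] at hz hz'
    exact hne (hz'.symm.trans hz)
  have hbmem : ∀ (c : G.ConnectedComponent) (z : V),
      z ∈ (wc c).map Subtype.val ++ ((wc c).map Subtype.val).dedup → z ∈ c.supp := by
    intro c z hz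
    rw [List.mem_append, List.mem_dedup, or_self] at hz
    exact hu_mem c z hz
  have hRW : ∀ x y : V, restrictWord W x y =
      (L.map fun c =>
        restrictWord ((wc c).map Subtype.val ++ ((wc c).map Subtype.val).dedup) x y).flatten ++
      restrictWord ((wc cm).map Subtype.val) x y := by
    intro x y
    rw [hWdef, restrictWord_append, restrictWord_flatten, List.map_map]
    rfl
  have hRcm : ∀ x y : V, x ∈ cm.supp → y ∈ cm.supp →
      restrictWord W x y = restrictWord ((wc cm).map Subtype.val) x y := by
    intro x y hx hy
    rw [hRW x y]
    have he : (L.map fun c =>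
        restrictWord ((wc c).map Subtype.val ++ ((wc c).map Subtype.val).dedup) x y).flatten
        = [] := by
      rw [List.flatten_eq_nil_iff]
      intro l hl
      obtain ⟨c, hcL, rfl⟩ := List.mem_map.mp hl
      have hccm : c ≠ cm := by
        rw [hLdef, Finset.mem_toList, Finset.mem_erase] at hcL
        exact hcL.1
      apply restrictWord_eq_nil
      intro z hz
      have hzc : z ∈ c.supp := hbmem c z hz
      exact ⟨fun e => hsupp_ne cm c x hx hccm (e ▸ hzc),
        fun e => hsupp_ne cm c y hy hccm (e ▸ hzc)⟩
    rw [he, List.nil_append]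
  have hRc : ∀ (c : G.ConnectedComponent) (x y : V), c ≠ cm → x ∈ c.supp → y ∈ c.supp →
      restrictWord W x y =
        restrictWord ((wc c).map Subtype.val ++ ((wc c).map Subtype.val).dedup) x y := by
    intro c x y hccm hx hy
    rw [hRW x y]
    have h2 : restrictWord ((wc cm).map Subtype.val) x y = [] := by
      apply restrictWord_eq_nil
      intro z hz
      have hzc : z ∈ cm.supp := hu_mem cm z hz
      exact ⟨fun e => hsupp_ne c cm x hx (Ne.symm hccm) (e ▸ hzc),
        fun e => hsupp_ne c cm y hy (Ne.symm hccm) (e ▸ hzc)⟩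
    rw [h2, List.append_nil]
    apply flatten_map_eq_single (c := c)
    · rw [hLdef, Finset.mem_toList, Finset.mem_erase]
      exact ⟨hccm, Finset.mem_univ _⟩
    · rw [hLdef]; exact Finset.nodup_toList _
    · intro c' hc' hne
      apply restrictWord_eq_nil
      intro z hz
      have hzc : z ∈ c'.supp := hbmem c' z hz
      exact ⟨fun e => hsupp_ne c c' x hx hne (e ▸ hzc),
        fun e => hsupp_ne c c' y hy hne (e ▸ hzc)⟩
  -- cross-component pairs do not alternate
  have hcross : ∀ (c : G.ConnectedComponent) (x y : V), c ≠ cm → x ∈ c.supp → y ∉ c.supp →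
      ¬ Alternates W x y := by
    intro c x y hccm hx hy hAlt
    have hcL : c ∈ L := by
      rw [hLdef, Finset.mem_toList, Finset.mem_erase]
      exact ⟨hccm, Finset.mem_univ _⟩
    have hinf : restrictWord ((wc c).map Subtype.val ++ ((wc c).map Subtype.val).dedup) x y
        <:+: restrictWord W x y := by
      rw [hRW x y]
      refine List.IsInfix.trans ?_ ((List.prefix_append _ _).isInfix)
      exact List.infix_of_mem_flatten (List.mem_map_of_mem hcL)
    unfold Alternates at hAlt
    have hchain := hAlt.infix hinf
    set s := restrictWord ((wc c).map Subtype.val ++ ((wc c).map Subtype.val).dedup) x y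
      with hsdef
    have hall : ∀ z ∈ s, z = x := by
      intro z hz
      obtain ⟨hz1, hz2⟩ := mem_of_mem_restrictWord hz
      rcases hz2 with rfl | rfl
      · rfl
      · exact absurd (hbmem c z hz1) hy
    have hx1 : x ∈ restrictWord ((wc c).map Subtype.val) x y :=
      mem_restrictWord_left (hu_all c x hx)
    have hx2 : x ∈ restrictWord (((wc c).map Subtype.val).dedup) x y :=
      mem_restrictWord_left (List.mem_dedup.mpr (hu_all c x hx))
    have hlen2 : 2 ≤ s.length := by
      rw [hsdef, restrictWord_append, List.length_append]
      have l1 := List.length_pos_iff.mpr (List.ne_nil_of_mem hx1)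
      have l2 := List.length_pos_iff.mpr (List.ne_nil_of_mem hx2)
      omega
    have hrep : s = List.replicate s.length x := List.eq_replicate_of_mem hall
    obtain ⟨k, hk⟩ : ∃ k, s.length = k + 2 := ⟨s.length - 2, by omega⟩
    rw [hrep, hk, List.replicate_succ, List.replicate_succ, List.isChain_cons_cons] at hchain
    exact hchain.1 rfl
  -- W represents G
  have hWmem : ∀ v : V, v ∈ W := by
    intro v
    have hv : v ∈ (G.connectedComponentMk v).supp :=
      (SimpleGraph.ConnectedComponent.mem_supp_iff _ _).mpr rfl
    by_cases hc : G.connectedComponentMk v = cm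
    · rw [hWdef, List.mem_append]
      right
      exact hu_all cm v (hc ▸ hv)
    · rw [hWdef, List.mem_append]
      left
      rw [List.mem_flatten]
      refine ⟨(wc (G.connectedComponentMk v)).map Subtype.val ++
        ((wc (G.connectedComponentMk v)).map Subtype.val).dedup,
        List.mem_map_of_mem ?_, List.mem_append.mpr (Or.inl (hu_all _ v hv))⟩
      rw [hLdef, Finset.mem_toList, Finset.mem_erase]
      exact ⟨hc, Finset.mem_univ _⟩
  have hWadj : ∀ x y : V, x ≠ y → (G.Adj x y ↔ Alternates W x y) := by
    intro x y hxy
    have hxm : x ∈ (G.connectedComponentMk x).supp :=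
      (SimpleGraph.ConnectedComponent.mem_supp_iff _ _).mpr rfl
    have hym : y ∈ (G.connectedComponentMk y).supp :=
      (SimpleGraph.ConnectedComponent.mem_supp_iff _ _).mpr rfl
    by_cases hsame : G.connectedComponentMk x = G.connectedComponentMk y
    · have hym' : y ∈ (G.connectedComponentMk x).supp := by
        rw [SimpleGraph.ConnectedComponent.mem_supp_iff]
        exact hsame.symm
      by_cases hccm : G.connectedComponentMk x = cm
      · have e1 := hRcm x y (hccm ▸ hxm) (hccm ▸ hym')
        have e2 : Alternates W x y ↔ Alternates ((wc cm).map Subtype.val) x y := by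
          unfold Alternates
          rw [e1]
        rw [e2]
        exact hu_adj cm x y (hccm ▸ hxm) (hccm ▸ hym') hxy
      · have e1 := hRc (G.connectedComponentMk x) x y hccm hxm hym'
        have e2 : Alternates W x y ↔ Alternates ((wc (G.connectedComponentMk x)).map
            Subtype.val ++ ((wc (G.connectedComponentMk x)).map Subtype.val).dedup) x y := by
          unfold Alternates
          rw [e1]
        rw [e2, alternates_append_dedup (hu_all _ x hxm) (hu_all _ y hym') hxy]
        exact hu_adj _ x y hxm hym' hxy
    · have hnadj : ¬ G.Adj x y :=
        fun h => hsame (SimpleGraph.ConnectedComponent.eq.mpr h.reachable)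
      have hnalt : ¬ Alternates W x y := by
        by_cases hxcm : G.connectedComponentMk x = cm
        · have hycm : G.connectedComponentMk y ≠ cm := fun h => hsame (hxcm.trans h.symm)
          have hxny : x ∉ (G.connectedComponentMk y).supp := by
            intro hx'
            exact hsame ((SimpleGraph.ConnectedComponent.mem_supp_iff _ _).mp hx')
          intro hA
          exact hcross (G.connectedComponentMk y) y x hycm hym hxny
            ((alternates_comm W x y).mp hA)
        · have hynx : y ∉ (G.connectedComponentMk x).supp := by
            intro hy'
            exact hsame ((SimpleGraph.ConnectedComponent.mem_supp_iff _ _).mp hy').symm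
          exact hcross (G.connectedComponentMk x) x y hxcm hxm hynx
      exact iff_of_false hnadj hnalt
  -- the length computation
  have hblock : ∀ c : G.ConnectedComponent,
      ((wc c).map Subtype.val ++ ((wc c).map Subtype.val).dedup).length =
        minRepLength (G.induce c.supp) + Nat.card c.supp := by
    intro c
    rw [List.length_append]
    congr 1
    · rw [List.length_map]
      exact hwclen c
    · have hnd := List.nodup_dedup ((wc c).map Subtype.val)
      have hf : c.supp.toFinset = ((wc c).map Subtype.val).dedup.toFinset := by
        ext z
        simp only [Set.mem_toFinset, List.mem_toFinset, List.mem_dedup]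
        exact ⟨fun h => hu_all c z h, fun h => hu_mem c z h⟩
      rw [Nat.card_coe_set_eq, Set.ncard_eq_toFinset_card', hf,
        List.toFinset_card_of_nodup hnd]
  have hlen : W.length + Nat.card cm.supp =
      ∑ c : G.ConnectedComponent, (minRepLength (G.induce c.supp) + Nat.card c.supp) := by
    have h1 : (L.map fun c =>
        (wc c).map Subtype.val ++ ((wc c).map Subtype.val).dedup).flatten.length =
        ∑ c ∈ Finset.univ.erase cm, (minRepLength (G.induce c.supp) + Nat.card c.supp) := by
      rw [List.length_flatten, List.map_map]
      have he : (List.length ∘ fun c : G.ConnectedComponent =>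
          (wc c).map Subtype.val ++ ((wc c).map Subtype.val).dedup) =
          fun c => minRepLength (G.induce c.supp) + Nat.card c.supp := funext hblock
      rw [he, hLdef, Finset.sum_map_toList]
    have h2 : ((wc cm).map Subtype.val).length = minRepLength (G.induce cm.supp) := by
      rw [List.length_map]
      exact hwclen cm
    rw [hWdef, List.length_append, h1, h2]
    have h3 : ∑ c ∈ Finset.univ.erase cm,
        (minRepLength (G.induce c.supp) + Nat.card c.supp) +
        (minRepLength (G.induce cm.supp) + Nat.card cm.supp) =
        ∑ c : G.ConnectedComponent, (minRepLength (G.induce c.supp) + Nat.card c.supp) :=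
      Finset.sum_erase_add _ _ (Finset.mem_univ cm)
    omega
  have hle : minRepLength G ≤ W.length := Nat.sInf_le ⟨W, ⟨hWmem, hWadj⟩, rfl⟩
  rw [hsup, finsum_eq_sum_of_fintype]
  omega
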